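/- Let p be an odd prime, q = p^m, u a positive integer, v = gcd(m, u), and suppose m/v ≡ 0 (mod 4). Then the kernel of the F_p-linear map x ↦ x^(p^(2u)) + x on F_q has exactly p^(2v) elements. -/

import Mathlib

open Finset

lemma aux_dvd_gcd_pow (a b c r : ℕ) (ha : 0 < a) (hb : r ∣ a ^ b - 1) (hc : r ∣ a ^ c - 1) :
    r ∣ a ^ Nat.gcd b c - 1 := by
  have key : ∀ k : ℕ, r ∣ a ^ k - 1 ↔ ((a : ZMod r)) ^ k = 1 := by
    intro k
    have h1 : 1 ≤ a ^ k := Nat.one_le_pow _ _ ha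
    rw [← ZMod.natCast_eq_zero_iff, Nat.cast_sub h1, Nat.cast_pow, Nat.cast_one,
      sub_eq_zero]
  rw [key] at hb hc ⊢
  exact pow_gcd_eq_one.mpr ⟨hb, hc⟩

open scoped Classical in
theorem stmt_9 (p m u : ℕ) [Fact p.Prime] (hp : Odd p) (hm : 0 < m) (hu : 0 < u)
    (v : ℕ) (hv : v = Nat.gcd m u) (h4 : m / v % 4 = 0)
    (F : Type*) [Field F] [Fintype F] [Algebra (ZMod p) F]
    (hF : Fintype.card F = p ^ m) :
    (Finset.univ.filter (fun x : F =>
        x ^ p ^ (2 * u) + x = 0)).card = p ^ (2 * v) := by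
  classical
  have hp' : p.Prime := Fact.out
  have hp2 : 2 ≤ p := hp'.two_le
  have hp0 : 0 < p := by omega
  have hv0 : 0 < v := hv ▸ Nat.gcd_pos_of_pos_left _ hm
  have hvm : v ∣ m := hv ▸ Nat.gcd_dvd_left m u
  have hvu : v ∣ u := hv ▸ Nat.gcd_dvd_right m u
  obtain ⟨k, hk⟩ := Nat.dvd_of_mod_eq_zero h4
  have hmk : m = v * (4 * k) := by
    rw [← hk, Nat.mul_div_cancel' hvm]
  have hk0 : 0 < k := by
    rcases Nat.eq_zero_or_pos k with h | h
    · rw [h] at hmk; omega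
    · exact h
  have hw : Nat.gcd (2 * u) m = 2 * v := by
    rw [Nat.gcd_comm]
    apply Nat.dvd_antisymm
    · have h1 : Nat.gcd m (2 * u) ∣ Nat.gcd (2 * m) (2 * u) :=
        Nat.dvd_gcd ((Nat.gcd_dvd_left _ _).trans (dvd_mul_left m 2)) (Nat.gcd_dvd_right _ _)
      rwa [Nat.gcd_mul_left, ← hv] at h1
    · exact Nat.dvd_gcd ⟨2 * k, by rw [hmk]; ring⟩ (mul_dvd_mul_left 2 hvu)
  set d := p ^ (2 * u) - 1 with hd
  set n := p ^ (2 * v) - 1 with hn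
  set N := p ^ m - 1 with hN
  have hpow1 : ∀ a : ℕ, 1 ≤ p ^ a := fun a => Nat.one_le_pow _ _ hp0
  have hn0 : 0 < n := by
    have : p ^ 1 ≤ p ^ (2 * v) := Nat.pow_le_pow_right hp0 (by omega)
    simp only [pow_one] at this; omega
  have hN0 : 0 < N := by
    have : p ^ 1 ≤ p ^ m := Nat.pow_le_pow_right hp0 hm
    simp only [pow_one] at this; omega
  have hnd : n ∣ d := by
    obtain ⟨t, ht⟩ := hvu
    have h2u : 2 * u = 2 * v * t := by rw [ht]; ring
    have := Nat.sub_dvd_pow_sub_pow (p ^ (2 * v)) 1 t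
    simpa [one_pow, ← pow_mul, ← h2u] using this
  have hnN : n ∣ N := by
    have hm' : m = 2 * v * (2 * k) := by rw [hmk]; ring
    have := Nat.sub_dvd_pow_sub_pow (p ^ (2 * v)) 1 (2 * k)
    simpa [one_pow, ← pow_mul, ← hm'] using this
  have h2nN : 2 * n ∣ N := by
    have hm' : m = 2 * v * (2 * k) := by rw [hmk]; ring
    set X : ℤ := (p : ℤ) ^ (2 * v) with hX
    set Q : ℤ := ∑ i ∈ Finset.range (2 * k), X ^ i with hQ
    have hgeom : Q * (X - 1) = (p : ℤ) ^ m - 1 := by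
      rw [hQ, geom_sum_mul, hX, ← pow_mul, ← hm']
    have hQeven : (2 : ℤ) ∣ Q := by
      have hpz : ((p : ℕ) : ZMod 2) = 1 := by
        rw [← ZMod.natCast_mod, Nat.odd_iff.mp hp, Nat.cast_one]
      have hcast : ((Q : ℤ) : ZMod 2) = 0 := by
        rw [hQ, hX]
        push_cast
        simp only [hpz, one_pow, Finset.sum_const, Finset.card_range, nsmul_eq_mul, mul_one]
        rw [Nat.cast_mul]
        simp
        left
        decide
      have := (ZMod.intCast_zmod_eq_zero_iff_dvd Q 2).mp hcast
      exact_mod_cast this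
    obtain ⟨Q', hQ'⟩ := hQeven
    have hint : ((2 * n : ℕ) : ℤ) ∣ ((N : ℕ) : ℤ) := by
      have e1 : ((N : ℕ) : ℤ) = (p : ℤ) ^ m - 1 := by
        rw [hN]; push_cast [Nat.cast_sub (hpow1 m)]; ring
      have e2 : ((2 * n : ℕ) : ℤ) = 2 * (X - 1) := by
        rw [hn, hX]; push_cast [Nat.cast_sub (hpow1 (2 * v))]; ring
      rw [e1, e2, ← hgeom, hQ']
      exact ⟨Q', by ring⟩
    exact_mod_cast hint
  have hNeven : 2 ∣ N := dvd_trans ⟨n, rfl⟩ h2nN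
  have hnhalf : n ∣ N / 2 := by
    obtain ⟨c, hc⟩ := h2nN
    refine ⟨c, ?_⟩
    have h2 : N = 2 * (n * c) := by rw [hc]; ring
    rw [h2, Nat.mul_div_cancel_left _ two_pos]
  have hgcd : Nat.gcd d N = n := by
    apply Nat.dvd_antisymm
    · have := aux_dvd_gcd_pow p (2 * u) m (Nat.gcd d N) hp0
        (Nat.gcd_dvd_left d N) (Nat.gcd_dvd_right d N)
      rwa [hw] at this
    · exact Nat.dvd_gcd hnd hnN
  have cardU : Fintype.card Fˣ = N := by rw [Fintype.card_units, hF]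
  obtain ⟨g, hg⟩ := IsCyclic.exists_generator (α := Fˣ)
  have hog : orderOf g = N := by
    rw [orderOf_eq_card_of_forall_mem_zpowers hg, Nat.card_eq_fintype_card, cardU]
  have hgN : g ^ N = 1 := by rw [← hog]; exact pow_orderOf_eq_one g
  have hneg : g ^ (N / 2) = -1 := by
    set y := g ^ (N / 2) with hy
    have hy2 : y ^ 2 = 1 := by
      rw [hy, ← pow_mul, Nat.div_mul_cancel hNeven, hgN]
    have hyval : (y : F) ^ 2 = 1 := by
      rw [← Units.val_pow_eq_pow_val, hy2, Units.val_one]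
    have hy1 : y ≠ 1 := by
      intro h
      have hdvd : orderOf g ∣ N / 2 := orderOf_dvd_of_pow_eq_one h
      rw [hog] at hdvd
      have h1 : N / 2 < N := Nat.div_lt_self hN0 one_lt_two
      have h2 : 0 < N / 2 := by omega
      exact absurd (Nat.le_of_dvd h2 hdvd) (by omega)
    rcases sq_eq_one_iff.mp hyval with h | h
    · exact absurd (Units.ext h) hy1
    · exact Units.ext (by rw [h]; simp)
  set A := Nat.gcdA d N with hA
  set B := Nat.gcdB d N with hB
  have hbez : (n : ℤ) = d * A + N * B := by
    rw [← hgcd]; exact Nat.gcd_eq_gcd_ab d N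
  obtain ⟨s, hs⟩ := hnhalf
  set x0 : Fˣ := g ^ (A * (s : ℤ)) with hx0def
  have hgNz : g ^ (N : ℤ) = 1 := by rw [zpow_natCast, hgN]
  have hx0 : x0 ^ d = -1 := by
    have e1 : (A * (s : ℤ)) * d = (n : ℤ) * s + (N : ℤ) * (-(B * s)) := by
      linear_combination (-(s : ℤ)) * hbez
    calc x0 ^ d = g ^ ((A * (s : ℤ)) * d) := by
          rw [hx0def, ← zpow_natCast (g ^ (A * (s : ℤ))) d, ← zpow_mul]
      _ = g ^ ((n : ℤ) * s + (N : ℤ) * (-(B * s))) := by rw [e1]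
      _ = (g ^ ((n : ℤ))) ^ (s : ℤ) * (g ^ (N : ℤ)) ^ (-(B * s)) := by
          rw [zpow_add, zpow_mul, zpow_mul]
      _ = g ^ ((n * s : ℕ) : ℤ) := by
          rw [hgNz, one_zpow, mul_one, Nat.cast_mul, zpow_mul]
      _ = g ^ (N / 2) := by rw [zpow_natCast, ← hs]
      _ = -1 := hneg
  have hiff : ∀ x : Fˣ, x ^ d = 1 ↔ x ^ n = 1 := by
    intro x
    constructor
    · intro h
      have h1 : orderOf x ∣ d := orderOf_dvd_of_pow_eq_one h
      have h2 : orderOf x ∣ N := by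
        rw [← cardU]; exact orderOf_dvd_card
      have h3 : orderOf x ∣ Nat.gcd d N := Nat.dvd_gcd h1 h2
      rw [hgcd] at h3
      exact orderOf_dvd_iff_pow_eq_one.mp h3
    · intro h
      exact orderOf_dvd_iff_pow_eq_one.mp ((orderOf_dvd_of_pow_eq_one h).trans hnd)
  have cardK : (univ.filter (fun x : Fˣ => x ^ n = 1)).card = n := by
    apply le_antisymm
    · exact IsCyclic.card_pow_eq_one_le hn0
    · set a := g ^ (N / n) with ha
      have hoa : orderOf a = n := by
        rw [ha, orderOf_pow, hog, Nat.gcd_eq_right (Nat.div_dvd_of_dvd hnN),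
          Nat.div_div_self hnN hN0.ne']
      have hinj : Set.InjOn (fun i => a ^ i) (Finset.range n : Set ℕ) := by
        intro i hi j hj hij
        simp only [Finset.coe_range, Set.mem_Iio] at hi hj
        exact pow_injOn_Iio_orderOf (by rwa [hoa]) (by rwa [hoa]) hij
      have hsub : (Finset.range n).image (fun i => a ^ i) ⊆
          univ.filter (fun x : Fˣ => x ^ n = 1) := by
        intro x hx
        simp only [mem_image, mem_range] at hx
        obtain ⟨i, _, rfl⟩ := hx
        simp only [mem_filter, mem_univ, true_and]
        rw [← pow_mul, mul_comm, pow_mul, ← hoa, pow_orderOf_eq_one, one_pow]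
      calc n = ((Finset.range n).image (fun i => a ^ i)).card := by
              rw [Finset.card_image_of_injOn hinj, Finset.card_range]
        _ ≤ _ := Finset.card_le_card hsub
  have cardSu : (univ.filter (fun x : Fˣ => x ^ d = -1)).card = n := by
    rw [← cardK]
    apply Finset.card_bij (fun x _ => x0⁻¹ * x)
    · intro x hx
      simp only [mem_filter, mem_univ, true_and] at hx ⊢
      rw [← hiff, mul_pow, inv_pow, hx0, hx]
      simp
    · intro x hx y hy h
      exact mul_left_cancel h
    · intro y hy
      simp only [mem_filter, mem_univ, true_and] at hy
      refine ⟨x0 * y, ?_, by rw [inv_mul_cancel_left]⟩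
      simp only [mem_filter, mem_univ, true_and]
      rw [mul_pow, hx0, (hiff y).mpr hy, mul_one]
  have hdsucc : d + 1 = p ^ (2 * u) := Nat.sub_add_cancel (hpow1 (2 * u))
  have hset : (Finset.univ.filter (fun x : F => x ^ p ^ (2 * u) + x = 0)) =
      insert (0 : F) ((univ.filter (fun x : Fˣ => x ^ d = -1)).image
        (fun x : Fˣ => (x : F))) := by
    ext x
    simp only [mem_filter, mem_univ, true_and, mem_insert, mem_image]
    constructor
    · intro hx
      rcases eq_or_ne x 0 with h0 | h0
      · exact Or.inl h0
      · refine Or.inr ⟨Units.mk0 x h0, ?_, rfl⟩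
        have hxd : x ^ d * x = -x := by
          rw [← pow_succ, hdsucc]
          linear_combination hx
        have hxd' : x ^ d = -1 := by
          apply mul_right_cancel₀ h0
          rw [hxd]; ring
        refine Units.ext ?_
        rw [Units.val_pow_eq_pow_val, Units.val_neg, Units.val_one, Units.val_mk0]
        exact hxd'
    · intro hx
      rcases hx with h0 | ⟨y, hy, rfl⟩
      · rw [h0, zero_pow (by positivity : p ^ (2 * u) ≠ 0), add_zero]
      · have hyv : ((y : F)) ^ d = -1 := by
          have := congrArg (Units.val) hy
          rwa [Units.val_pow_eq_pow_val, Units.val_neg, Units.val_one] at this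
        rw [← hdsucc, pow_succ, hyv]
        ring
  have h0mem : (0 : F) ∉ (univ.filter (fun x : Fˣ => x ^ d = -1)).image
      (fun x : Fˣ => (x : F)) := by
    simp only [mem_image, not_exists]
    intro y
    exact fun h => Units.ne_zero y h.2
  rw [hset, Finset.card_insert_of_notMem h0mem,
    Finset.card_image_of_injective _ Units.val_injective, cardSu]
  have := hpow1 (2 * v)
  omega
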